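/- Let pp_3(n) be the number of pairs (α,β) of partitions with |α|+|β|=n where the parts of α lie in {2,3} and the parts of β lie in {2,3,4}. Then pp_3(n) ≥ pp_3(n-1) for all n ≥ 2 with n ≠ 7, and pp_3(n) - pp_3(n-1) ≥ (n-15)/2 for all odd n ≥ 17. -/

import Mathlib

/-- `pCount k n` is the number of partitions of `n` all of whose parts lie in `{2, …, k}`. -/
noncomputable def pCount (k n : ℕ) : ℕ :=
  Nat.card {p : n.Partition // ∀ i ∈ p.parts, 2 ≤ i ∧ i ≤ k}

/-- `ppCount k n` is the number of pairs `(α, β)` of partitions with `|α| + |β| = n`,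
where every part of `α` lies in `{2, …, k}` and every part of `β` lies in `{2, …, k+1}`. -/
noncomputable def ppCount (k n : ℕ) : ℕ :=
  ∑ i ∈ Finset.range (n + 1), pCount k i * pCount (k + 1) (n - i)

open PowerSeries Finset

namespace PP3

/-- The power series `∑ x^{kn}`. -/
noncomputable def A (k : ℕ) : PowerSeries ℕ := PowerSeries.mk fun n => if k ∣ n then 1 else 0

@[simp] lemma coeff_A (k n : ℕ) : coeff (R := ℕ) n (A k) = if k ∣ n then 1 else 0 := coeff_mk _ _

lemma A_eq (k : ℕ) (hk : k ≠ 0) : A k = 1 + X ^ k * A k := by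
  ext n
  rw [map_add, coeff_one, coeff_X_pow_mul']
  simp only [coeff_A]
  rcases le_or_gt k n with h | h
  · have hn0 : n ≠ 0 := by omega
    have hdvd : (k ∣ n) ↔ (k ∣ n - k) :=
      ⟨fun hd => Nat.dvd_sub hd dvd_rfl, fun hd => by
        have := Nat.dvd_add hd (dvd_refl k); rwa [Nat.sub_add_cancel h] at this⟩
    simp only [if_pos h, hn0, hdvd, if_false, zero_add]
  · have h2 : ¬ k ≤ n := by omega
    rcases Nat.eq_zero_or_pos n with rfl | hn
    · simp [hk]
    · have h1 : ¬ k ∣ n := fun hd => absurd (Nat.le_of_dvd hn hd) (by omega)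
      simp [h1, h2, hn.ne']

lemma coeff_A_mul (k : ℕ) (hk : k ≠ 0) (F : PowerSeries ℕ) (m : ℕ) :
    coeff (R := ℕ) (m + k) (A k * F) = coeff (R := ℕ) (m + k) F + coeff (R := ℕ) m (A k * F) := by
  conv_lhs => rw [A_eq k hk]
  rw [add_mul, one_mul, mul_assoc, map_add, coeff_X_pow_mul]

lemma coeff_A_mul_lt (k : ℕ) (F : PowerSeries ℕ) (m : ℕ) (h : m < k) :
    coeff (R := ℕ) m (A k * F) = coeff (R := ℕ) m F := by
  conv_lhs => rw [A_eq k (by omega)]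
  rw [add_mul, one_mul, mul_assoc, map_add, coeff_X_pow_mul', if_neg (by omega), add_zero]

noncomputable def g1 (n : ℕ) : ℕ := coeff (R := ℕ) n (A 3 * A 4)
noncomputable def g2 (n : ℕ) : ℕ := coeff (R := ℕ) n (A 2 * (A 3 * A 4))
noncomputable def g3 (n : ℕ) : ℕ := coeff (R := ℕ) n (A 3 * (A 2 * (A 3 * A 4)))
noncomputable def g4 (n : ℕ) : ℕ := coeff (R := ℕ) n (A 2 * (A 3 * (A 2 * (A 3 * A 4))))

lemma g1_rec (m : ℕ) : g1 (m + 3) = (if 4 ∣ (m + 3) then 1 else 0) + g1 m := by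
  rw [g1, coeff_A_mul 3 (by norm_num), coeff_A]; rfl

lemma g1_lt (m : ℕ) (h : m < 3) : g1 m = if 4 ∣ m then 1 else 0 := by
  rw [g1, coeff_A_mul_lt 3 _ _ h, coeff_A]

lemma g2_rec (m : ℕ) : g2 (m + 2) = g1 (m + 2) + g2 m := by
  rw [g2, coeff_A_mul 2 (by norm_num)]; rfl

lemma g2_lt (m : ℕ) (h : m < 2) : g2 m = g1 m := by
  rw [g2, coeff_A_mul_lt 2 _ _ h]; rfl

lemma g3_rec (m : ℕ) : g3 (m + 3) = g2 (m + 3) + g3 m := by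
  rw [g3, coeff_A_mul 3 (by norm_num)]; rfl

lemma g3_lt (m : ℕ) (h : m < 3) : g3 m = g2 m := by
  rw [g3, coeff_A_mul_lt 3 _ _ h]; rfl

lemma g4_rec (m : ℕ) : g4 (m + 2) = g3 (m + 2) + g4 m := by
  rw [g4, coeff_A_mul 2 (by norm_num)]; rfl

lemma g4_lt (m : ℕ) (h : m < 2) : g4 m = g3 m := by
  rw [g4, coeff_A_mul_lt 2 _ _ h]; rfl

lemma g1_eq (n : ℕ) : g1 n = n / 12 + (if n % 12 = 1 ∨ n % 12 = 2 ∨ n % 12 = 5 then 0 else 1) := by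
  induction n using Nat.strong_induction_on with
  | _ n ih =>
    match n, ih with
    | 0, _ => rw [g1_lt 0 (by norm_num)]; norm_num
    | 1, _ => rw [g1_lt 1 (by norm_num)]; norm_num
    | 2, _ => rw [g1_lt 2 (by norm_num)]; norm_num
    | (m+3), ih =>
      rw [g1_rec, ih m (by omega)]
      split_ifs <;> omega

lemma decomp3 (s : Multiset ℕ) (h : ∀ i ∈ s, i = 2 ∨ i = 3) :
    s = Multiset.replicate (s.count 2) 2 + Multiset.replicate (s.count 3) 3 := by
  ext a
  simp only [Multiset.count_add, Multiset.count_replicate]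
  by_cases h2 : a = 2
  · subst h2; simp
  by_cases h3 : a = 3
  · subst h3; simp
  · have ha : a ∉ s := fun hm => by rcases h a hm with rfl | rfl <;> simp_all
    rw [Multiset.count_eq_zero_of_notMem ha]; split_ifs <;> omega

lemma decomp4 (s : Multiset ℕ) (h : ∀ i ∈ s, i = 2 ∨ i = 3 ∨ i = 4) :
    s = Multiset.replicate (s.count 2) 2 + Multiset.replicate (s.count 3) 3
        + Multiset.replicate (s.count 4) 4 := by
  ext a
  simp only [Multiset.count_add, Multiset.count_replicate]
  by_cases h2 : a = 2
  · subst h2; simp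
  by_cases h3 : a = 3
  · subst h3; simp
  by_cases h4 : a = 4
  · subst h4; simp
  · have ha : a ∉ s := fun hm => by rcases h a hm with rfl | rfl | rfl <;> simp_all
    rw [Multiset.count_eq_zero_of_notMem ha]; split_ifs <;> omega

noncomputable def e3 (n : ℕ) :
    {p : n.Partition // ∀ i ∈ p.parts, 2 ≤ i ∧ i ≤ 3} ≃ {x : ℕ × ℕ // 2 * x.1 + 3 * x.2 = n} where
  toFun p := ⟨(p.1.parts.count 2, p.1.parts.count 3), by
    have hd := decomp3 p.1.parts (fun i hi => by have := p.2 i hi; omega)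
    have hs := p.1.parts_sum
    rw [hd] at hs
    simp only [Multiset.sum_add, Multiset.sum_replicate, smul_eq_mul] at hs
    omega⟩
  invFun x := ⟨⟨Multiset.replicate x.1.1 2 + Multiset.replicate x.1.2 3,
    by intro i hi; rcases Multiset.mem_add.mp hi with h | h <;>
        (have := Multiset.eq_of_mem_replicate h; omega),
    by simp only [Multiset.sum_add, Multiset.sum_replicate, smul_eq_mul]
       have := x.2; omega⟩, by
    intro i hi; rcases Multiset.mem_add.mp hi with h | h <;>
      (have := Multiset.eq_of_mem_replicate h; omega)⟩
  left_inv p := by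
    apply Subtype.ext; apply Nat.Partition.ext
    exact (decomp3 p.1.parts (fun i hi => by have := p.2 i hi; omega)).symm
  right_inv x := by
    apply Subtype.ext
    have h23 : (2 : ℕ) ≠ 3 := by norm_num
    ext
    · simp [Multiset.count_replicate]
    · simp [Multiset.count_replicate]

noncomputable def e4 (n : ℕ) :
    {p : n.Partition // ∀ i ∈ p.parts, 2 ≤ i ∧ i ≤ 4} ≃
      {x : ℕ × ℕ × ℕ // 2 * x.1 + 3 * x.2.1 + 4 * x.2.2 = n} where
  toFun p := ⟨(p.1.parts.count 2, p.1.parts.count 3, p.1.parts.count 4), by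
    have hd := decomp4 p.1.parts (fun i hi => by have := p.2 i hi; omega)
    have hs := p.1.parts_sum
    rw [hd] at hs
    simp only [Multiset.sum_add, Multiset.sum_replicate, smul_eq_mul] at hs
    dsimp only
    omega⟩
  invFun x := ⟨⟨Multiset.replicate x.1.1 2 + Multiset.replicate x.1.2.1 3
      + Multiset.replicate x.1.2.2 4,
    by intro i hi
       rcases Multiset.mem_add.mp hi with h | h
       · rcases Multiset.mem_add.mp h with h' | h' <;>
           (have := Multiset.eq_of_mem_replicate h'; omega)
       · have := Multiset.eq_of_mem_replicate h; omega,
    by simp only [Multiset.sum_add, Multiset.sum_replicate, smul_eq_mul]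
       have := x.2; omega⟩, by
    intro i hi
    rcases Multiset.mem_add.mp hi with h | h
    · rcases Multiset.mem_add.mp h with h' | h' <;>
        (have := Multiset.eq_of_mem_replicate h'; omega)
    · have := Multiset.eq_of_mem_replicate h; omega⟩
  left_inv p := by
    apply Subtype.ext; apply Nat.Partition.ext
    exact (decomp4 p.1.parts (fun i hi => by have := p.2 i hi; omega)).symm
  right_inv x := by
    apply Subtype.ext
    ext
    · simp [Multiset.count_replicate]
    · simp [Multiset.count_replicate]
    · simp [Multiset.count_replicate]



lemma prod_ite_and (a b : Prop) [Decidable a] [Decidable b] :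
    (if a then (1:ℕ) else 0) * (if b then 1 else 0) = if a ∧ b then 1 else 0 := by
  split_ifs <;> simp_all

noncomputable def epair (k1 k2 n : ℕ) (h1 : 0 < k1) (h2 : 0 < k2) :
    {x : ℕ × ℕ // k1 * x.1 + k2 * x.2 = n} ≃
      {y // y ∈ (Finset.HasAntidiagonal.antidiagonal n).filter fun p => k1 ∣ p.1 ∧ k2 ∣ p.2} where
  toFun x := ⟨(k1 * x.1.1, k2 * x.1.2), by
    simp only [mem_filter, Finset.HasAntidiagonal.mem_antidiagonal]
    exact ⟨x.2, ⟨x.1.1, rfl⟩, ⟨x.1.2, rfl⟩⟩⟩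
  invFun y := ⟨(y.1.1 / k1, y.1.2 / k2), by
    have hy := y.2
    simp only [mem_filter, Finset.HasAntidiagonal.mem_antidiagonal] at hy
    rw [Nat.mul_div_cancel' hy.2.1, Nat.mul_div_cancel' hy.2.2]
    exact hy.1⟩
  left_inv x := by
    apply Subtype.ext
    ext
    · exact Nat.mul_div_cancel_left _ h1
    · exact Nat.mul_div_cancel_left _ h2
  right_inv y := by
    apply Subtype.ext
    have hy := y.2
    simp only [mem_filter, Finset.HasAntidiagonal.mem_antidiagonal] at hy
    ext
    · exact Nat.mul_div_cancel' hy.2.1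
    · exact Nat.mul_div_cancel' hy.2.2

lemma card_pair (k1 k2 n : ℕ) (h1 : 0 < k1) (h2 : 0 < k2) :
    Nat.card {x : ℕ × ℕ // k1 * x.1 + k2 * x.2 = n} = coeff (R := ℕ) n (A k1 * A k2) := by
  rw [coeff_mul]
  simp only [coeff_A]
  rw [Finset.sum_congr rfl fun p _ => prod_ite_and _ _, Finset.sum_boole,
    Nat.card_congr (epair k1 k2 n h1 h2), Nat.card_eq_finsetCard, Nat.cast_id]

noncomputable def etriple (n : ℕ) :
    {x : ℕ × ℕ × ℕ // 2 * x.1 + 3 * x.2.1 + 4 * x.2.2 = n} ≃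
      {y // y ∈ ((Finset.HasAntidiagonal.antidiagonal n).sigma fun p => Finset.HasAntidiagonal.antidiagonal p.2).filter
        fun x => 2 ∣ x.1.1 ∧ 3 ∣ x.2.1 ∧ 4 ∣ x.2.2} where
  toFun x := ⟨⟨(2 * x.1.1, 3 * x.1.2.1 + 4 * x.1.2.2), (3 * x.1.2.1, 4 * x.1.2.2)⟩, by
    simp only [mem_filter, mem_sigma, Finset.HasAntidiagonal.mem_antidiagonal]
    refine ⟨⟨?_, trivial⟩, ⟨x.1.1, rfl⟩, ⟨x.1.2.1, rfl⟩, ⟨x.1.2.2, rfl⟩⟩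
    have := x.2; omega⟩
  invFun y := ⟨(y.1.1.1 / 2, y.1.2.1 / 3, y.1.2.2 / 4), by
    have hy := y.2
    simp only [mem_filter, mem_sigma, Finset.HasAntidiagonal.mem_antidiagonal] at hy
    obtain ⟨⟨hpn, hq⟩, hd2, hd3, hd4⟩ := hy
    rw [Nat.mul_div_cancel' hd2, Nat.mul_div_cancel' hd3, Nat.mul_div_cancel' hd4]
    omega⟩
  left_inv x := by
    apply Subtype.ext
    ext
    · exact Nat.mul_div_cancel_left _ (by norm_num)
    · exact Nat.mul_div_cancel_left _ (by norm_num)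
    · exact Nat.mul_div_cancel_left _ (by norm_num)
  right_inv y := by
    rcases y with ⟨⟨⟨i, j⟩, l, m⟩, hy⟩
    simp only [mem_filter, mem_sigma, Finset.HasAntidiagonal.mem_antidiagonal] at hy
    obtain ⟨⟨hpn, hq⟩, hd2, hd3, hd4⟩ := hy
    apply Subtype.ext
    show (⟨(2 * (i / 2), 3 * (l / 3) + 4 * (m / 4)), (3 * (l / 3), 4 * (m / 4))⟩ :
      (_ : ℕ × ℕ) × ℕ × ℕ) = ⟨(i, j), (l, m)⟩
    rw [Nat.mul_div_cancel' hd2, Nat.mul_div_cancel' hd3, Nat.mul_div_cancel' hd4, hq]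

lemma card_triple (n : ℕ) :
    Nat.card {x : ℕ × ℕ × ℕ // 2 * x.1 + 3 * x.2.1 + 4 * x.2.2 = n}
      = coeff (R := ℕ) n (A 2 * (A 3 * A 4)) := by
  rw [coeff_mul]
  have h1 : ∀ p ∈ Finset.HasAntidiagonal.antidiagonal n, coeff (R := ℕ) p.1 (A 2) * coeff (R := ℕ) p.2 (A 3 * A 4)
      = ∑ q ∈ Finset.HasAntidiagonal.antidiagonal p.2, if 2 ∣ p.1 ∧ 3 ∣ q.1 ∧ 4 ∣ q.2 then 1 else 0 := by
    intro p _
    rw [coeff_mul, Finset.mul_sum]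
    refine Finset.sum_congr rfl fun q _ => ?_
    simp only [coeff_A]
    split_ifs <;> simp_all
  rw [Finset.sum_congr rfl h1, Finset.sum_sigma', Finset.sum_boole,
    Nat.card_congr (etriple n), Nat.card_eq_finsetCard, Nat.cast_id]


lemma g2_0 : g2 0 = 1 := by rw [g2_lt 0 (by norm_num), g1_eq]; (try norm_num)
lemma g2_1 : g2 1 = 0 := by rw [g2_lt 1 (by norm_num), g1_eq]; (try norm_num)
lemma g2_2 : g2 2 = 1 := by rw [show (2:ℕ) = 0+2 from rfl, g2_rec, g1_eq, g2_0]; (try norm_num)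
lemma g2_3 : g2 3 = 1 := by rw [show (3:ℕ) = 1+2 from rfl, g2_rec, g1_eq, g2_1]; (try norm_num)
lemma g2_4 : g2 4 = 2 := by rw [show (4:ℕ) = 2+2 from rfl, g2_rec, g1_eq, g2_2]; (try norm_num)
lemma g2_5 : g2 5 = 1 := by rw [show (5:ℕ) = 3+2 from rfl, g2_rec, g1_eq, g2_3]; (try norm_num)
lemma g2_6 : g2 6 = 3 := by rw [show (6:ℕ) = 4+2 from rfl, g2_rec, g1_eq, g2_4]; (try norm_num)
lemma g2_7 : g2 7 = 2 := by rw [show (7:ℕ) = 5+2 from rfl, g2_rec, g1_eq, g2_5]; (try norm_num)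
lemma g2_8 : g2 8 = 4 := by rw [show (8:ℕ) = 6+2 from rfl, g2_rec, g1_eq, g2_6]; (try norm_num)
lemma g2_9 : g2 9 = 3 := by rw [show (9:ℕ) = 7+2 from rfl, g2_rec, g1_eq, g2_7]; (try norm_num)
lemma g2_10 : g2 10 = 5 := by rw [show (10:ℕ) = 8+2 from rfl, g2_rec, g1_eq, g2_8]; (try norm_num)
lemma g2_11 : g2 11 = 4 := by rw [show (11:ℕ) = 9+2 from rfl, g2_rec, g1_eq, g2_9]; (try norm_num)
lemma g2_12 : g2 12 = 7 := by rw [show (12:ℕ) = 10+2 from rfl, g2_rec, g1_eq, g2_10]; (try norm_num)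
lemma g2_13 : g2 13 = 5 := by rw [show (13:ℕ) = 11+2 from rfl, g2_rec, g1_eq, g2_11]; (try norm_num)
lemma g2_14 : g2 14 = 8 := by rw [show (14:ℕ) = 12+2 from rfl, g2_rec, g1_eq, g2_12]; (try norm_num)
lemma g2_15 : g2 15 = 7 := by rw [show (15:ℕ) = 13+2 from rfl, g2_rec, g1_eq, g2_13]; (try norm_num)
lemma g2_16 : g2 16 = 10 := by rw [show (16:ℕ) = 14+2 from rfl, g2_rec, g1_eq, g2_14]; (try norm_num)
lemma g2_17 : g2 17 = 8 := by rw [show (17:ℕ) = 15+2 from rfl, g2_rec, g1_eq, g2_15]; (try norm_num)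
lemma g2_18 : g2 18 = 12 := by rw [show (18:ℕ) = 16+2 from rfl, g2_rec, g1_eq, g2_16]; (try norm_num)
lemma g2_19 : g2 19 = 10 := by rw [show (19:ℕ) = 17+2 from rfl, g2_rec, g1_eq, g2_17]; (try norm_num)
lemma g2_20 : g2 20 = 14 := by rw [show (20:ℕ) = 18+2 from rfl, g2_rec, g1_eq, g2_18]; (try norm_num)
lemma g2_21 : g2 21 = 12 := by rw [show (21:ℕ) = 19+2 from rfl, g2_rec, g1_eq, g2_19]; (try norm_num)
lemma g2_22 : g2 22 = 16 := by rw [show (22:ℕ) = 20+2 from rfl, g2_rec, g1_eq, g2_20]; (try norm_num)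
lemma g2_23 : g2 23 = 14 := by rw [show (23:ℕ) = 21+2 from rfl, g2_rec, g1_eq, g2_21]; (try norm_num)
lemma g2_24 : g2 24 = 19 := by rw [show (24:ℕ) = 22+2 from rfl, g2_rec, g1_eq, g2_22]; (try norm_num)
lemma g2_25 : g2 25 = 16 := by rw [show (25:ℕ) = 23+2 from rfl, g2_rec, g1_eq, g2_23]; (try norm_num)
lemma g2_26 : g2 26 = 21 := by rw [show (26:ℕ) = 24+2 from rfl, g2_rec, g1_eq, g2_24]; (try norm_num)
lemma g3_0 : g3 0 = 1 := by rw [g3_lt 0 (by norm_num), g2_0]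
lemma g3_1 : g3 1 = 0 := by rw [g3_lt 1 (by norm_num), g2_1]
lemma g3_2 : g3 2 = 1 := by rw [g3_lt 2 (by norm_num), g2_2]
lemma g3_3 : g3 3 = 2 := by rw [show (3:ℕ) = 0+3 from rfl, g3_rec, g2_3, g3_0]
lemma g3_4 : g3 4 = 2 := by rw [show (4:ℕ) = 1+3 from rfl, g3_rec, g2_4, g3_1]
lemma g3_5 : g3 5 = 2 := by rw [show (5:ℕ) = 2+3 from rfl, g3_rec, g2_5, g3_2]
lemma g3_6 : g3 6 = 5 := by rw [show (6:ℕ) = 3+3 from rfl, g3_rec, g2_6, g3_3]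
lemma g3_7 : g3 7 = 4 := by rw [show (7:ℕ) = 4+3 from rfl, g3_rec, g2_7, g3_4]
lemma g3_8 : g3 8 = 6 := by rw [show (8:ℕ) = 5+3 from rfl, g3_rec, g2_8, g3_5]
lemma g3_9 : g3 9 = 8 := by rw [show (9:ℕ) = 6+3 from rfl, g3_rec, g2_9, g3_6]
lemma g3_10 : g3 10 = 9 := by rw [show (10:ℕ) = 7+3 from rfl, g3_rec, g2_10, g3_7]
lemma g3_11 : g3 11 = 10 := by rw [show (11:ℕ) = 8+3 from rfl, g3_rec, g2_11, g3_8]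
lemma g3_12 : g3 12 = 15 := by rw [show (12:ℕ) = 9+3 from rfl, g3_rec, g2_12, g3_9]
lemma g3_13 : g3 13 = 14 := by rw [show (13:ℕ) = 10+3 from rfl, g3_rec, g2_13, g3_10]
lemma g3_14 : g3 14 = 18 := by rw [show (14:ℕ) = 11+3 from rfl, g3_rec, g2_14, g3_11]
lemma g3_15 : g3 15 = 22 := by rw [show (15:ℕ) = 12+3 from rfl, g3_rec, g2_15, g3_12]
lemma g3_16 : g3 16 = 24 := by rw [show (16:ℕ) = 13+3 from rfl, g3_rec, g2_16, g3_13]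
lemma g3_17 : g3 17 = 26 := by rw [show (17:ℕ) = 14+3 from rfl, g3_rec, g2_17, g3_14]
lemma g3_18 : g3 18 = 34 := by rw [show (18:ℕ) = 15+3 from rfl, g3_rec, g2_18, g3_15]
lemma g3_19 : g3 19 = 34 := by rw [show (19:ℕ) = 16+3 from rfl, g3_rec, g2_19, g3_16]
lemma g3_20 : g3 20 = 40 := by rw [show (20:ℕ) = 17+3 from rfl, g3_rec, g2_20, g3_17]
lemma g3_21 : g3 21 = 46 := by rw [show (21:ℕ) = 18+3 from rfl, g3_rec, g2_21, g3_18]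
lemma g3_22 : g3 22 = 50 := by rw [show (22:ℕ) = 19+3 from rfl, g3_rec, g2_22, g3_19]
lemma g3_23 : g3 23 = 54 := by rw [show (23:ℕ) = 20+3 from rfl, g3_rec, g2_23, g3_20]
lemma g3_24 : g3 24 = 65 := by rw [show (24:ℕ) = 21+3 from rfl, g3_rec, g2_24, g3_21]
lemma g3_25 : g3 25 = 66 := by rw [show (25:ℕ) = 22+3 from rfl, g3_rec, g2_25, g3_22]
lemma g3_26 : g3 26 = 75 := by rw [show (26:ℕ) = 23+3 from rfl, g3_rec, g2_26, g3_23]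
lemma g4_0 : g4 0 = 1 := by rw [g4_lt 0 (by norm_num), g3_0]
lemma g4_1 : g4 1 = 0 := by rw [g4_lt 1 (by norm_num), g3_1]
lemma g4_2 : g4 2 = 2 := by rw [show (2:ℕ) = 0+2 from rfl, g4_rec, g3_2, g4_0]
lemma g4_3 : g4 3 = 2 := by rw [show (3:ℕ) = 1+2 from rfl, g4_rec, g3_3, g4_1]
lemma g4_4 : g4 4 = 4 := by rw [show (4:ℕ) = 2+2 from rfl, g4_rec, g3_4, g4_2]
lemma g4_5 : g4 5 = 4 := by rw [show (5:ℕ) = 3+2 from rfl, g4_rec, g3_5, g4_3]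
lemma g4_6 : g4 6 = 9 := by rw [show (6:ℕ) = 4+2 from rfl, g4_rec, g3_6, g4_4]
lemma g4_7 : g4 7 = 8 := by rw [show (7:ℕ) = 5+2 from rfl, g4_rec, g3_7, g4_5]
lemma g4_8 : g4 8 = 15 := by rw [show (8:ℕ) = 6+2 from rfl, g4_rec, g3_8, g4_6]
lemma g4_9 : g4 9 = 16 := by rw [show (9:ℕ) = 7+2 from rfl, g4_rec, g3_9, g4_7]
lemma g4_10 : g4 10 = 24 := by rw [show (10:ℕ) = 8+2 from rfl, g4_rec, g3_10, g4_8]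
lemma g4_11 : g4 11 = 26 := by rw [show (11:ℕ) = 9+2 from rfl, g4_rec, g3_11, g4_9]
lemma g4_12 : g4 12 = 39 := by rw [show (12:ℕ) = 10+2 from rfl, g4_rec, g3_12, g4_10]
lemma g4_13 : g4 13 = 40 := by rw [show (13:ℕ) = 11+2 from rfl, g4_rec, g3_13, g4_11]
lemma g4_14 : g4 14 = 57 := by rw [show (14:ℕ) = 12+2 from rfl, g4_rec, g3_14, g4_12]
lemma g4_15 : g4 15 = 62 := by rw [show (15:ℕ) = 13+2 from rfl, g4_rec, g3_15, g4_13]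
lemma g4_16 : g4 16 = 81 := by rw [show (16:ℕ) = 14+2 from rfl, g4_rec, g3_16, g4_14]
lemma g4_17 : g4 17 = 88 := by rw [show (17:ℕ) = 15+2 from rfl, g4_rec, g3_17, g4_15]
lemma g4_18 : g4 18 = 115 := by rw [show (18:ℕ) = 16+2 from rfl, g4_rec, g3_18, g4_16]
lemma g4_19 : g4 19 = 122 := by rw [show (19:ℕ) = 17+2 from rfl, g4_rec, g3_19, g4_17]



set_option maxHeartbeats 1600000 in
lemma d2_eq (n : ℕ) : (g2 (n+1) : ℤ) - g2 n =
    if n % 2 = 0 then (if n % 12 = 2 then 0 else -1) - ((n / 12 : ℕ) : ℤ)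
    else 2 * ((n / 12 : ℕ) : ℤ) +
      (if n % 12 = 1 ∨ n % 12 = 3 then 1 else if n % 12 = 11 then 3 else 2) := by
  induction n using Nat.strong_induction_on with
  | _ n ih =>
  match n, ih with
  | 0, _ => norm_num [g2_0, g2_1]
  | 1, _ => norm_num [g2_1, g2_2]
  | (m+2), ih =>
    have h1 := ih m (by omega)
    have e1 : g2 (m+3) = g1 (m+3) + g2 (m+1) := g2_rec (m+1)
    have e2 : g2 (m+2) = g1 (m+2) + g2 m := g2_rec m
    have f1 := g1_eq (m+3)
    have f2 := g1_eq (m+2)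
    rw [show m+2+1 = m+3 from rfl, e1, e2]
    split_ifs at * <;> omega

lemma S_nonneg (m : ℕ) (h : 3 ≤ m) :
    0 ≤ ((g2 (m+1) : ℤ) - g2 m) + ((g2 (m-2) : ℤ) - g2 (m-3)) := by
  obtain ⟨k, rfl⟩ : ∃ k, m = k+3 := ⟨m-3, by omega⟩
  have h1 := d2_eq (k+3)
  have h2 := d2_eq k
  rw [show k+3-2 = k+1 from by omega, show k+3-3 = k from by omega]
  split_ifs at h1 h2 <;> omega

lemma g3_mono (n : ℕ) (h : 13 ≤ n) : g3 n ≤ g3 (n+1) := by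
  induction n using Nat.strong_induction_on with
  | _ n ih =>
  rcases lt_or_ge n 19 with h19 | h19
  · have v13 := g3_13; have v14 := g3_14; have v15 := g3_15; have v16 := g3_16
    have v17 := g3_17; have v18 := g3_18; have v19 := g3_19
    interval_cases n <;> (try norm_num) <;> omega
  · have a1 : g3 (n+1) = g2 (n+1) + g3 (n-2) := by
      have := g3_rec (n-2); rw [show n-2+3 = n+1 from by omega] at this; exact this
    have a2 : g3 (n-2) = g2 (n-2) + g3 (n-5) := by
      have := g3_rec (n-5); rw [show n-5+3 = n-2 from by omega] at this; exact this
    have a3 : g3 n = g2 n + g3 (n-3) := by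
      have := g3_rec (n-3); rw [show n-3+3 = n from by omega] at this; exact this
    have a4 : g3 (n-3) = g2 (n-3) + g3 (n-6) := by
      have := g3_rec (n-6); rw [show n-6+3 = n-3 from by omega] at this; exact this
    have hS := S_nonneg n (by omega)
    have hIH := ih (n-6) (by omega) (by omega)
    rw [show n-6+1 = n-5 from by omega] at hIH
    omega

lemma g3_odd (n : ℕ) (h21 : 21 ≤ n) (hodd : n % 2 = 1) : g3 (n-1) + 1 ≤ g3 n := by
  induction n using Nat.strong_induction_on with
  | _ n ih =>
  rcases lt_or_ge n 27 with h27 | h27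
  · have v20 := g3_20; have v21 := g3_21; have v22 := g3_22; have v23 := g3_23
    have v24 := g3_24; have v25 := g3_25; have v26 := g3_26
    interval_cases n <;> (try norm_num) <;> omega
  · have a1 : g3 n = g2 n + g3 (n-3) := by
      have := g3_rec (n-3); rw [show n-3+3 = n from by omega] at this; exact this
    have a2 : g3 (n-3) = g2 (n-3) + g3 (n-6) := by
      have := g3_rec (n-6); rw [show n-6+3 = n-3 from by omega] at this; exact this
    have a3 : g3 (n-1) = g2 (n-1) + g3 (n-4) := by
      have := g3_rec (n-4); rw [show n-4+3 = n-1 from by omega] at this; exact this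
    have a4 : g3 (n-4) = g2 (n-4) + g3 (n-7) := by
      have := g3_rec (n-7); rw [show n-7+3 = n-4 from by omega] at this; exact this
    have hS := S_nonneg (n-1) (by omega)
    rw [show n-1+1 = n from by omega, show n-1-2 = n-3 from by omega,
      show n-1-3 = n-4 from by omega] at hS
    have hIH := ih (n-6) (by omega) (by omega) (by omega)
    rw [show n-6-1 = n-7 from by omega] at hIH
    omega

lemma part1_aux (n : ℕ) (h : 14 ≤ n) : g4 (n-1) ≤ g4 n := by
  induction n using Nat.strong_induction_on with
  | _ n ih =>
  rcases lt_or_ge n 16 with h16 | h16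
  · have v13 := g4_13; have v14 := g4_14; have v15 := g4_15
    interval_cases n <;> (try norm_num) <;> omega
  · have a1 : g4 n = g3 n + g4 (n-2) := by
      have := g4_rec (n-2); rw [show n-2+2 = n from by omega] at this; exact this
    have a2 : g4 (n-1) = g3 (n-1) + g4 (n-3) := by
      have := g4_rec (n-3); rw [show n-3+2 = n-1 from by omega] at this; exact this
    have hm : g3 (n-1) ≤ g3 n := by
      have := g3_mono (n-1) (by omega); rw [show n-1+1 = n from by omega] at this; exact this
    have hIH := ih (n-2) (by omega) (by omega)
    rw [show n-2-1 = n-3 from by omega] at hIH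
    omega

lemma part2_aux (q : ℕ) : g4 (16 + 2*q) + (q + 1) ≤ g4 (17 + 2*q) := by
  induction q with
  | zero => have := g4_16; have := g4_17; norm_num; omega
  | succ q ih =>
    match q, ih with
    | 0, _ => have := g4_18; have := g4_19; norm_num; omega
    | (p+1), ih =>
      show g4 (16 + 2*(p+2)) + ((p+2) + 1) ≤ g4 (17 + 2*(p+2))
      have a1 : g4 (17 + 2*(p+2)) = g3 (17 + 2*(p+2)) + g4 (17 + 2*(p+1)) := by
        have := g4_rec (17 + 2*(p+1)); rw [show 17+2*(p+1)+2 = 17+2*(p+2) from by ring] at this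
        exact this
      have a2 : g4 (16 + 2*(p+2)) = g3 (16 + 2*(p+2)) + g4 (16 + 2*(p+1)) := by
        have := g4_rec (16 + 2*(p+1)); rw [show 16+2*(p+1)+2 = 16+2*(p+2) from by ring] at this
        exact this
      have hodd := g3_odd (17 + 2*(p+2)) (by omega) (by omega)
      rw [show 17+2*(p+2)-1 = 16+2*(p+2) from by omega] at hodd
      omega


lemma pCount3_eq (n : ℕ) : pCount 3 n = coeff (R := ℕ) n (A 2 * A 3) := by
  rw [pCount, Nat.card_congr (e3 n)]
  exact card_pair 2 3 n (by norm_num) (by norm_num)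

lemma pCount4_eq (n : ℕ) : pCount 4 n = g2 n := by
  rw [pCount, Nat.card_congr (e4 n)]
  exact card_triple n

lemma ppCount_eq (n : ℕ) : ppCount 3 n = g4 n := by
  rw [ppCount, g4,
    show A 2 * (A 3 * (A 2 * (A 3 * A 4))) = (A 2 * A 3) * (A 2 * (A 3 * A 4)) from by ring,
    coeff_mul, Finset.Nat.sum_antidiagonal_eq_sum_range_succ_mk]
  refine Finset.sum_congr rfl fun i _ => ?_
  rw [pCount3_eq, show (3+1:ℕ) = 4 from rfl, pCount4_eq]
  rfl

end PP3

open PP3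

/-- `pp₃(n) ≥ pp₃(n-1)` for all `n ≥ 2` with `n ≠ 7`, and
`pp₃(n) - pp₃(n-1) ≥ (n-15)/2` for all odd `n ≥ 17`. -/
theorem pp3_difference :
    (∀ n : ℕ, 2 ≤ n → n ≠ 7 → ppCount 3 (n - 1) ≤ ppCount 3 n) ∧
    (∀ n : ℕ, 17 ≤ n → Odd n →
      (((n - 15) / 2 : ℕ) : ℤ) ≤ (ppCount 3 n : ℤ) - (ppCount 3 (n - 1) : ℤ)) := by
  constructor
  · intro n h2 h7
    rw [ppCount_eq, ppCount_eq]
    rcases lt_or_ge n 14 with h | h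
    · have v1 := g4_1; have v2 := g4_2; have v3 := g4_3; have v4 := g4_4
      have v5 := g4_5; have v6 := g4_6; have v7 := g4_7; have v8 := g4_8
      have v9 := g4_9; have v10 := g4_10; have v11 := g4_11; have v12 := g4_12
      have v13 := g4_13
      interval_cases n <;> (try norm_num) <;> omega
    · exact part1_aux n h
  · intro n h17 hodd
    obtain ⟨q, rfl⟩ : ∃ q, n = 17 + 2*q := by
      obtain ⟨k, hk⟩ := hodd
      exact ⟨(n-17)/2, by omega⟩
    have h := part2_aux q
    rw [ppCount_eq, ppCount_eq, show 17 + 2*q - 1 = 16 + 2*q from by omega,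
      show (17 + 2*q - 15)/2 = q + 1 from by omega]
    push_cast
    omega
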